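/- Let d ∈ ℕ, d ≥ 1, and let U : ℝ → M_d(ℂ) be a differentiable family of unitary matrices whose derivative has operator norm v(t) := ‖U'(t)‖_op integrable on [s,t], s ≤ t. Then for any two orthogonal unit vectors x, y ∈ ℂ^d (⟨y,x⟩ = 0), the transition amplitude of the propagator U(t)U(s)* satisfies |⟨y, U(t)U(s)* x⟩| ≤ ∫_s^t v(r) dr. Consequently, the 'leave' probability satisfies Σ_{k : e_k ⊥ x} |⟨e_k, U(t)U(s)* x⟩|² = 1 − |⟨x, U(t)U(s)* x⟩|² when {e_k} is an orthonormal basis containing x. -/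

import Mathlib

open Matrix
open scoped Matrix.Norms.L2Operator

section Aux

variable {d : ℕ}

lemma aux_toEuclideanLin_one (x : EuclideanSpace ℂ (Fin d)) :
    Matrix.toEuclideanLin (1 : Matrix (Fin d) (Fin d) ℂ) x = x := by
  simp [Matrix.toEuclideanLin_apply]

lemma aux_norm_toEuclideanLin_unitary {A : Matrix (Fin d) (Fin d) ℂ}
    (hA : A ∈ Matrix.unitaryGroup (Fin d) ℂ) (x : EuclideanSpace ℂ (Fin d)) :
    ‖Matrix.toEuclideanLin A x‖ = ‖x‖ := by
  have h1 : Aᴴ * A = 1 := by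
    simpa [Matrix.star_eq_conjTranspose] using (Unitary.mem_iff.mp hA).1
  have h2 : (inner ℂ (Matrix.toEuclideanLin A x) (Matrix.toEuclideanLin A x) : ℂ)
      = inner ℂ x x := by
    calc (inner ℂ (Matrix.toEuclideanLin A x) (Matrix.toEuclideanLin A x) : ℂ)
        = inner ℂ x (Matrix.toEuclideanLin Aᴴ (Matrix.toEuclideanLin A x)) := by
          rw [Matrix.toEuclideanLin_conjTranspose_eq_adjoint,
            LinearMap.adjoint_inner_right]
      _ = inner ℂ x (Matrix.toEuclideanLin (Aᴴ * A) x) := by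
          congr 1
          simp [Matrix.toEuclideanLin_apply, Matrix.mulVec_mulVec]
      _ = inner ℂ x x := by rw [h1, aux_toEuclideanLin_one]
  rw [@inner_self_eq_norm_sq_to_K ℂ, @inner_self_eq_norm_sq_to_K ℂ] at h2
  have h3 : ‖Matrix.toEuclideanLin A x‖ ^ 2 = ‖x‖ ^ 2 := by exact_mod_cast h2
  nlinarith [norm_nonneg (Matrix.toEuclideanLin A x), norm_nonneg x]

end Aux

/-- for a differentiable family of unitaries `U` with integrable
operator-norm derivative `v(r) = ‖U'(r)‖` on `[s,t]`, the transition amplitude of the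
propagator `U(t)U(s)*` between orthogonal unit vectors is bounded by `∫_s^t v(r) dr`;
consequently, for an orthonormal basis `b` containing the unit vector `x` (say `b i₀ = x`),
the 'leave' probability satisfies
`Σ_{k ≠ i₀} |⟨b k, U(t)U(s)* x⟩|² = 1 − |⟨x, U(t)U(s)* x⟩|²`. -/
theorem transition_amplitude_bound {d : ℕ} (hd : 1 ≤ d)
    (U : ℝ → Matrix (Fin d) (Fin d) ℂ)
    (hU : ∀ t, U t ∈ Matrix.unitaryGroup (Fin d) ℂ)
    (hUdiff : Differentiable ℝ U)
    {s t : ℝ} (hst : s ≤ t)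
    (hUint : MeasureTheory.IntegrableOn (fun r => ‖deriv U r‖) (Set.Icc s t)) :
    (∀ x y : EuclideanSpace ℂ (Fin d), ‖x‖ = 1 → ‖y‖ = 1 →
      (inner ℂ y x : ℂ) = 0 →
        ‖(inner ℂ y (Matrix.toEuclideanLin (U t * (U s)ᴴ) x) : ℂ)‖
          ≤ ∫ r in s..t, ‖deriv U r‖) ∧
      ∀ x : EuclideanSpace ℂ (Fin d), ‖x‖ = 1 →
        ∀ (b : OrthonormalBasis (Fin d) ℂ (EuclideanSpace ℂ (Fin d))) (i₀ : Fin d),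
          b i₀ = x →
            ∑ k ∈ Finset.univ.filter (· ≠ i₀),
                ‖(inner ℂ (b k) (Matrix.toEuclideanLin (U t * (U s)ᴴ) x) : ℂ)‖ ^ 2
              = 1 - ‖(inner ℂ x (Matrix.toEuclideanLin (U t * (U s)ᴴ) x) : ℂ)‖ ^ 2 := by
  haveI : NeZero d := ⟨by omega⟩
  have hAs : (U s)ᴴ ∈ Matrix.unitaryGroup (Fin d) ℂ := by
    simpa [Matrix.star_eq_conjTranspose] using Unitary.star_mem (hU s)
  have hprod : U t * (U s)ᴴ ∈ Matrix.unitaryGroup (Fin d) ℂ := mul_mem (hU t) hAs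
  constructor
  · intro x y hx hy hxy
    set A := (U s)ᴴ with hAdef
    have hAnorm : ‖A‖ = 1 := CStarRing.norm_of_mem_unitary hAs
    let Lm : Matrix (Fin d) (Fin d) ℂ →ₗ[ℂ] ℂ :=
      { toFun := fun M => inner ℂ y (Matrix.toEuclideanLin (M * A) x)
        map_add' := by intro M N; simp [add_mul, inner_add_right]
        map_smul' := by intro c M; simp [smul_mul_assoc, inner_smul_right] }
    have hLm_bound : ∀ M, ‖Lm M‖ ≤ ‖M‖ := by
      intro M
      have h1 : ‖(inner ℂ y (Matrix.toEuclideanLin (M * A) x) : ℂ)‖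
          ≤ ‖y‖ * ‖Matrix.toEuclideanLin (M * A) x‖ := norm_inner_le_norm _ _
      have h2 : ‖Matrix.toEuclideanLin (M * A) x‖ ≤ ‖M * A‖ * ‖x‖ :=
        Matrix.l2_opNorm_mulVec (M * A) x
      have h3 : ‖M * A‖ ≤ ‖M‖ * ‖A‖ := Matrix.l2_opNorm_mul M A
      calc ‖Lm M‖ = ‖(inner ℂ y (Matrix.toEuclideanLin (M * A) x) : ℂ)‖ := rfl
        _ ≤ ‖y‖ * ‖Matrix.toEuclideanLin (M * A) x‖ := h1
        _ ≤ 1 * (‖M * A‖ * ‖x‖) := by rw [hy]; gcongr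
        _ = ‖M * A‖ := by rw [hx]; ring
        _ ≤ ‖M‖ * ‖A‖ := h3
        _ = ‖M‖ := by rw [hAnorm, mul_one]
    let Lc : Matrix (Fin d) (Fin d) ℂ →L[ℂ] ℂ :=
      Lm.mkContinuous 1 (fun M => by simpa using hLm_bound M)
    set f : ℝ → ℂ := fun r => Lm (U r) with hfdef
    have hfd : ∀ r, HasDerivAt f (Lm (deriv U r)) r := fun r => by
      have h := (Lc.restrictScalars ℝ).hasFDerivAt.comp_hasDerivAt r ((hUdiff r).hasDerivAt)
      exact h
    have hderiv : deriv f = fun r => Lm (deriv U r) := funext fun r => (hfd r).deriv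
    have hint : IntervalIntegrable (deriv f) MeasureTheory.volume s t := by
      rw [intervalIntegrable_iff_integrableOn_Icc_of_le hst]
      apply MeasureTheory.Integrable.mono' hUint
        ((stronglyMeasurable_deriv f).aestronglyMeasurable.restrict)
      filter_upwards with r
      rw [hderiv]
      exact hLm_bound _
    have key : ∫ r in s..t, deriv f r = f t - f s :=
      intervalIntegral.integral_eq_sub_of_hasDerivAt
        (fun r _ => ((hfd r).differentiableAt).hasDerivAt) hint
    have hfs : f s = 0 := by
      have h1 : U s * A = 1 := by
        simpa [Matrix.star_eq_conjTranspose] using (Unitary.mem_iff.mp (hU s)).2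
      show (inner ℂ y (Matrix.toEuclideanLin (U s * A) x) : ℂ) = 0
      rw [h1, aux_toEuclideanLin_one, hxy]
    have hUintI : IntervalIntegrable (fun r => ‖deriv U r‖) MeasureTheory.volume s t := by
      rw [intervalIntegrable_iff_integrableOn_Icc_of_le hst]; exact hUint
    have hmain : ‖f t‖ ≤ ∫ r in s..t, ‖deriv U r‖ := by
      calc ‖f t‖ = ‖∫ r in s..t, deriv f r‖ := by rw [key, hfs, sub_zero]
        _ ≤ ∫ r in s..t, ‖deriv f r‖ := intervalIntegral.norm_integral_le_integral_norm hst
        _ ≤ ∫ r in s..t, ‖deriv U r‖ := by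
            apply intervalIntegral.integral_mono_on hst hint.norm hUintI
            intro r _
            rw [hderiv]
            exact hLm_bound _
    exact hmain
  · intro x hx b i₀ hbi
    set w : EuclideanSpace ℂ (Fin d) := Matrix.toEuclideanLin (U t * (U s)ᴴ) x with hw
    have hwnorm : ‖w‖ = 1 := by
      rw [hw, aux_norm_toEuclideanLin_unitary hprod, hx]
    have hpars : ∑ k, ‖(inner ℂ (b k) w : ℂ)‖ ^ 2 = 1 := by
      have h1 : ∀ k, b.repr w k = inner ℂ (b k) w := fun k => b.repr_apply_apply w k
      have h2 : ‖b.repr w‖ = 1 := by rw [b.repr.norm_map, hwnorm]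
      have h3 := EuclideanSpace.norm_eq (b.repr w)
      rw [h2] at h3
      have h4 : ∑ k, ‖b.repr w k‖ ^ 2 = 1 := Real.sqrt_eq_one.mp h3.symm
      rw [← h4]
      exact Finset.sum_congr rfl fun k _ => by rw [h1]
    have hsplit : ‖(inner ℂ (b i₀) w : ℂ)‖ ^ 2
        + ∑ k ∈ Finset.univ.filter (· ≠ i₀), ‖(inner ℂ (b k) w : ℂ)‖ ^ 2 = 1 := by
      rw [Finset.filter_ne' Finset.univ i₀,
        Finset.add_sum_erase Finset.univ (fun k => ‖(inner ℂ (b k) w : ℂ)‖ ^ 2)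
          (Finset.mem_univ i₀)]
      exact hpars
    rw [hbi] at hsplit
    linarith
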